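/- Let \lambda = (\lambda_1,...,\lambda_k,\mu_1,...,\mu_h) be a partition of length at most k+h. Then for variables z_1,...,z_k and y_1,...,y_h, the limit as \epsilon \to 0 of S_\lambda(z_1,...,z_k, \epsilon y_1, ..., \epsilon y_h) / \epsilon^{|\mu|} equals S_{(\lambda_1,...,\lambda_k)}(z_1,...,z_k) \cdot S_{(\mu_1,...,\mu_h)}(y_1,...,y_h), where |\mu| = \mu_1 + ... + \mu_h. -/
import Mathlib


/-- The cells of the skew Young diagram `lam / mu`: pairs `(i, c)` with
`mu i ≤ c < lam i`. -/
def sCells (m : ℕ) (mu lam : Fin m → ℕ) : Finset (Fin m × ℕ) :=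
  Finset.univ.biUnion fun i => (Finset.Ico (mu i) (lam i)).image fun c => (i, c)

/-- A filling of the skew shape is semistandard if rows are weakly increasing
(left to right) and columns are strictly increasing (top to bottom). -/
def IsSSYT {m nv : ℕ} (mu lam : Fin m → ℕ) (T : sCells m mu lam → Fin nv) : Prop :=
  (∀ a b : sCells m mu lam, (a : Fin m × ℕ).1 = (b : Fin m × ℕ).1 →
      (a : Fin m × ℕ).2 ≤ (b : Fin m × ℕ).2 → T a ≤ T b) ∧
  (∀ a b : sCells m mu lam, (a : Fin m × ℕ).1 < (b : Fin m × ℕ).1 →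
      (a : Fin m × ℕ).2 = (b : Fin m × ℕ).2 → T a < T b)

open Classical in
/-- The skew Schur polynomial of shape `lam / mu` in the variables `u`, as the
generating function of semistandard tableaux: each tableau contributes the product
over the variables of `u k` raised to the number of entries equal to `k`. -/
noncomputable def skewSchur (m nv : ℕ) (mu lam : Fin m → ℕ) (u : Fin nv → ℝ) : ℝ :=
  ∑ T : sCells m mu lam → Fin nv,
    if IsSSYT mu lam T then
      ∏ k : Fin nv, u k ^ (Finset.univ.filter fun a => T a = k).card
    else 0

/-- The Schur polynomial of shape `lam` in the variables `u`. -/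
noncomputable def schur (m nv : ℕ) (lam : Fin m → ℕ) (u : Fin nv → ℝ) : ℝ :=
  skewSchur m nv (fun _ => 0) lam u

lemma mem_sCells {m : ℕ} {mu lam : Fin m → ℕ} {p : Fin m × ℕ} :
    p ∈ sCells m mu lam ↔ mu p.1 ≤ p.2 ∧ p.2 < lam p.1 := by
  simp only [sCells, Finset.mem_biUnion, Finset.mem_image, Finset.mem_Ico, Finset.mem_univ,
    true_and]
  constructor
  · rintro ⟨i, c, hc, rfl⟩; exact hc
  · rintro ⟨h1, h2⟩; exact ⟨p.1, p.2, ⟨h1, h2⟩, rfl⟩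

lemma rowLB {m nv : ℕ} {Λ : Fin m → ℕ} (hΛ : Antitone Λ)
    {T : sCells m (fun _ => 0) Λ → Fin nv} (hT : IsSSYT _ _ T) :
    ∀ a : sCells m (fun _ => 0) Λ, ((a : Fin m × ℕ).1 : ℕ) ≤ (T a : ℕ) := by
  suffices H : ∀ n : ℕ, ∀ a : sCells m (fun _ => 0) Λ, ((a : Fin m × ℕ).1 : ℕ) = n →
      n ≤ (T a : ℕ) by
    intro a; exact H _ a rfl
  intro n
  induction n with
  | zero => intro a _; exact Nat.zero_le _
  | succ n IH =>
    rintro ⟨⟨i, c⟩, hmem⟩ hi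
    simp only at hi
    have hcm : c < Λ i := (mem_sCells.1 hmem).2
    have hn : n < m := by have := i.isLt; omega
    have hmem' : ((⟨n, hn⟩ : Fin m), c) ∈ sCells m (fun _ => 0) Λ := by
      rw [mem_sCells]
      refine ⟨Nat.zero_le _, lt_of_lt_of_le hcm (hΛ ?_)⟩
      simp [Fin.le_def]; omega
    have hlt := hT.2 ⟨_, hmem'⟩ ⟨_, hmem⟩ (by simp [Fin.lt_def]; omega) rfl
    have := IH ⟨_, hmem'⟩ rfl
    have : (T ⟨_, hmem'⟩ : ℕ) < (T ⟨_, hmem⟩ : ℕ) := hlt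
    omega

lemma card_row {m : ℕ} (Λ : Fin m → ℕ) (i : Fin m) :
    (Finset.univ.filter fun a : sCells m (fun _ => 0) Λ => (a : Fin m × ℕ).1 = i).card
      = Λ i := by
  classical
  rw [show Λ i = (Finset.range (Λ i)).card from (Finset.card_range _).symm]
  refine Finset.card_bij (fun a _ => (a : Fin m × ℕ).2) ?_ ?_ ?_
  · rintro ⟨⟨r, c⟩, hmem⟩ ha
    simp only [Finset.mem_filter] at ha
    obtain ⟨-, rfl⟩ := ha
    exact Finset.mem_range.2 (mem_sCells.1 hmem).2
  · rintro ⟨⟨r1, c1⟩, h1⟩ ha1 ⟨⟨r2, c2⟩, h2⟩ ha2 hc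
    simp only [Finset.mem_filter] at ha1 ha2
    simp only at hc
    apply Subtype.ext
    simp only [Prod.mk.injEq]
    exact ⟨ha1.2.trans ha2.2.symm, hc⟩
  · intro c hc
    have hmem : ((i, c) : Fin m × ℕ) ∈ sCells m (fun _ => 0) Λ := by
      rw [mem_sCells]; exact ⟨Nat.zero_le _, Finset.mem_range.1 hc⟩
    exact ⟨⟨_, hmem⟩, by simp, rfl⟩

lemma sum_natAdd_indicator {k h : ℕ} (v : Fin (k+h)) :
    (∑ j : Fin h, if v = Fin.natAdd k j then (1:ℕ) else 0) = if k ≤ v.val then 1 else 0 := by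
  by_cases hk : k ≤ v.val
  · have hv : v.val - k < h := by omega
    have : ∀ j : Fin h, v = Fin.natAdd k j ↔ j = ⟨v.val - k, hv⟩ := by
      intro j
      constructor
      · intro hj; apply Fin.ext; have := congrArg Fin.val hj
        rw [Fin.coe_natAdd] at this; simp only []; omega
      · rintro rfl; apply Fin.ext; rw [Fin.coe_natAdd]; simp only []; omega
    simp only [this, Finset.sum_ite_eq', Finset.mem_univ, if_true, hk]
  · have : ∀ j : Fin h, ¬ (v = Fin.natAdd k j) := by
      intro j hj; apply hk; rw [hj, Fin.coe_natAdd]; omega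
    simp [this, hk]

lemma card_ge_eq_sum {α : Type*} [Fintype α] [DecidableEq α] {k h : ℕ} (g : α → Fin (k+h)) :
    (Finset.univ.filter fun a => k ≤ (g a).val).card
      = ∑ j : Fin h, (Finset.univ.filter fun a => g a = Fin.natAdd k j).card := by
  classical
  simp only [Finset.card_filter]
  rw [Finset.sum_comm]
  exact Finset.sum_congr rfl fun a _ => (sum_natAdd_indicator (g a)).symm

section Split

variable {k h : ℕ} (lam : Fin k → ℕ) (mu : Fin h → ℕ)

def bigUp (a : sCells k (fun _ => 0) lam) :
    sCells (k+h) (fun _ => 0) (Fin.append lam mu) :=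
  ⟨(Fin.castAdd h (a : Fin k × ℕ).1, (a : Fin k × ℕ).2), by
    rw [mem_sCells]
    exact ⟨Nat.zero_le _, by rw [Fin.append_left]; exact (mem_sCells.1 a.2).2⟩⟩

def bigDown (a : sCells h (fun _ => 0) mu) :
    sCells (k+h) (fun _ => 0) (Fin.append lam mu) :=
  ⟨(Fin.natAdd k (a : Fin h × ℕ).1, (a : Fin h × ℕ).2), by
    rw [mem_sCells]
    exact ⟨Nat.zero_le _, by rw [Fin.append_right]; exact (mem_sCells.1 a.2).2⟩⟩

def upCell (a : sCells (k+h) (fun _ => 0) (Fin.append lam mu))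
    (hi : ((a : Fin (k+h) × ℕ).1 : ℕ) < k) : sCells k (fun _ => 0) lam :=
  ⟨(⟨((a : Fin (k+h) × ℕ).1 : ℕ), hi⟩, (a : Fin (k+h) × ℕ).2), by
    rw [mem_sCells]
    refine ⟨Nat.zero_le _, ?_⟩
    have h1 : (a : Fin (k+h) × ℕ).1 = Fin.castAdd h ⟨((a : Fin (k+h) × ℕ).1 : ℕ), hi⟩ :=
      Fin.ext rfl
    have h2 := (mem_sCells.1 a.2).2
    rwa [h1, Fin.append_left] at h2⟩

def downCell (a : sCells (k+h) (fun _ => 0) (Fin.append lam mu))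
    (hi : k ≤ ((a : Fin (k+h) × ℕ).1 : ℕ)) : sCells h (fun _ => 0) mu :=
  ⟨(⟨((a : Fin (k+h) × ℕ).1 : ℕ) - k, by have := (a : Fin (k+h) × ℕ).1.isLt; omega⟩,
    (a : Fin (k+h) × ℕ).2), by
    rw [mem_sCells]
    refine ⟨Nat.zero_le _, ?_⟩
    have h1 : (a : Fin (k+h) × ℕ).1
        = Fin.natAdd k ⟨((a : Fin (k+h) × ℕ).1 : ℕ) - k,
            by have := (a : Fin (k+h) × ℕ).1.isLt; omega⟩ :=
      Fin.ext (by rw [Fin.coe_natAdd]; simp only []; omega)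
    have h2 := (mem_sCells.1 a.2).2
    rwa [h1, Fin.append_right] at h2⟩

def joinT (T1 : sCells k (fun _ => 0) lam → Fin k) (T2 : sCells h (fun _ => 0) mu → Fin h) :
    sCells (k+h) (fun _ => 0) (Fin.append lam mu) → Fin (k+h) :=
  fun a => if hi : ((a : Fin (k+h) × ℕ).1 : ℕ) < k then
    Fin.castAdd h (T1 (upCell lam mu a hi))
  else Fin.natAdd k (T2 (downCell lam mu a (le_of_not_gt hi)))

def splitT1 (T : sCells (k+h) (fun _ => 0) (Fin.append lam mu) → Fin (k+h))
    (hlt : ∀ a : sCells (k+h) (fun _ => 0) (Fin.append lam mu),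
      ((a : Fin (k+h) × ℕ).1 : ℕ) < k → ((T a) : ℕ) < k) :
    sCells k (fun _ => 0) lam → Fin k :=
  fun a1 => ⟨(T (bigUp lam mu a1) : ℕ), hlt _ (a1 : Fin k × ℕ).1.isLt⟩

def splitT2 (T : sCells (k+h) (fun _ => 0) (Fin.append lam mu) → Fin (k+h))
    (hge : ∀ a : sCells (k+h) (fun _ => 0) (Fin.append lam mu),
      k ≤ ((a : Fin (k+h) × ℕ).1 : ℕ) → k ≤ ((T a) : ℕ)) :
    sCells h (fun _ => 0) mu → Fin h :=
  fun a2 => ⟨(T (bigDown lam mu a2) : ℕ) - k, by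
    have h1 : k ≤ (T (bigDown lam mu a2) : ℕ) := hge _ (Nat.le_add_right k _)
    have h2 := (T (bigDown lam mu a2)).isLt
    omega⟩

end Split
section Split2

variable {k h : ℕ} (lam : Fin k → ℕ) (mu : Fin h → ℕ)

lemma ssyt_split1 {T : sCells (k+h) (fun _ => 0) (Fin.append lam mu) → Fin (k+h)}
    (hT : IsSSYT (fun _ => 0) (Fin.append lam mu) T) (hlt) :
    IsSSYT (fun _ => 0) lam (splitT1 lam mu T hlt) := by
  constructor
  · intro a b hrow hcol
    have key : T (bigUp lam mu a) ≤ T (bigUp lam mu b) := by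
      apply hT.1
      · show Fin.castAdd h (a : Fin k × ℕ).1 = Fin.castAdd h (b : Fin k × ℕ).1
        rw [hrow]
      · exact hcol
    rw [Fin.le_def]
    exact Fin.le_def.1 key
  · intro a b hrow hcol
    have key : T (bigUp lam mu a) < T (bigUp lam mu b) := by
      apply hT.2
      · show Fin.castAdd h (a : Fin k × ℕ).1 < Fin.castAdd h (b : Fin k × ℕ).1
        exact hrow
      · exact hcol
    rw [Fin.lt_def]
    exact Fin.lt_def.1 key

lemma ssyt_split2 {T : sCells (k+h) (fun _ => 0) (Fin.append lam mu) → Fin (k+h)}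
    (hT : IsSSYT (fun _ => 0) (Fin.append lam mu) T) (hge) :
    IsSSYT (fun _ => 0) mu (splitT2 lam mu T hge) := by
  constructor
  · intro a b hrow hcol
    have key : T (bigDown lam mu a) ≤ T (bigDown lam mu b) := by
      apply hT.1
      · show Fin.natAdd k (a : Fin h × ℕ).1 = Fin.natAdd k (b : Fin h × ℕ).1
        rw [hrow]
      · exact hcol
    rw [Fin.le_def]
    show (T (bigDown lam mu a) : ℕ) - k ≤ (T (bigDown lam mu b) : ℕ) - k
    have := Fin.le_def.1 key
    omega
  · intro a b hrow hcol
    have key : T (bigDown lam mu a) < T (bigDown lam mu b) := by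
      apply hT.2
      · show Fin.natAdd k (a : Fin h × ℕ).1 < Fin.natAdd k (b : Fin h × ℕ).1
        simp only [Fin.lt_def, Fin.coe_natAdd]
        exact Nat.add_lt_add_left (Fin.lt_def.1 hrow) k
      · exact hcol
    have hka : k ≤ (T (bigDown lam mu a) : ℕ) := hge _ (Nat.le_add_right k _)
    rw [Fin.lt_def]
    show (T (bigDown lam mu a) : ℕ) - k < (T (bigDown lam mu b) : ℕ) - k
    have := Fin.lt_def.1 key
    omega

lemma ssyt_join {T1 : sCells k (fun _ => 0) lam → Fin k}
    {T2 : sCells h (fun _ => 0) mu → Fin h}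
    (h1 : IsSSYT (fun _ => 0) lam T1) (h2 : IsSSYT (fun _ => 0) mu T2) :
    IsSSYT (fun _ => 0) (Fin.append lam mu) (joinT lam mu T1 T2) := by
  constructor
  · intro a b hrow hcol
    unfold joinT
    by_cases hi : ((a : Fin (k+h) × ℕ).1 : ℕ) < k
    · have hib : ((b : Fin (k+h) × ℕ).1 : ℕ) < k := hrow ▸ hi
      rw [dif_pos hi, dif_pos hib]
      rw [Fin.le_def]
      show (T1 (upCell lam mu a hi) : ℕ) ≤ (T1 (upCell lam mu b hib) : ℕ)
      apply Fin.le_def.1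
      apply h1.1
      · show (⟨((a : Fin (k+h) × ℕ).1 : ℕ), hi⟩ : Fin k) = ⟨((b : Fin (k+h) × ℕ).1 : ℕ), hib⟩
        exact Fin.ext (show ((a : Fin (k+h) × ℕ).1 : ℕ) = ((b : Fin (k+h) × ℕ).1 : ℕ) from congrArg Fin.val hrow)
      · exact hcol
    · have hib : ¬ ((b : Fin (k+h) × ℕ).1 : ℕ) < k := hrow ▸ hi
      rw [dif_neg hi, dif_neg hib]
      rw [Fin.le_def]
      show k + (T2 (downCell lam mu a _) : ℕ) ≤ k + (T2 (downCell lam mu b _) : ℕ)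
      have : T2 (downCell lam mu a (le_of_not_gt hi)) ≤ T2 (downCell lam mu b (le_of_not_gt hib)) := by
        apply h2.1
        · show (⟨((a : Fin (k+h) × ℕ).1 : ℕ) - k, _⟩ : Fin h) = ⟨((b : Fin (k+h) × ℕ).1 : ℕ) - k, _⟩
          have hh := congrArg Fin.val hrow
          exact Fin.ext (by show ((a : Fin (k+h) × ℕ).1 : ℕ) - k = ((b : Fin (k+h) × ℕ).1 : ℕ) - k; omega)
        · exact hcol
      exact Nat.add_le_add_left (Fin.le_def.1 this) k
  · intro a b hrow hcol
    unfold joinT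
    by_cases hib : ((b : Fin (k+h) × ℕ).1 : ℕ) < k
    · have hia : ((a : Fin (k+h) × ℕ).1 : ℕ) < k := lt_trans (Fin.lt_def.1 hrow) hib
      rw [dif_pos hia, dif_pos hib]
      rw [Fin.lt_def]
      show (T1 (upCell lam mu a hia) : ℕ) < (T1 (upCell lam mu b hib) : ℕ)
      apply Fin.lt_def.1
      apply h1.2
      · show (⟨((a : Fin (k+h) × ℕ).1 : ℕ), hia⟩ : Fin k) < ⟨((b : Fin (k+h) × ℕ).1 : ℕ), hib⟩
        exact Fin.lt_def.1 hrow
      · exact hcol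
    · by_cases hia : ((a : Fin (k+h) × ℕ).1 : ℕ) < k
      · rw [dif_pos hia, dif_neg hib]
        rw [Fin.lt_def]
        show (T1 (upCell lam mu a hia) : ℕ) < k + (T2 (downCell lam mu b _) : ℕ)
        have := (T1 (upCell lam mu a hia)).isLt
        omega
      · rw [dif_neg hia, dif_neg hib]
        rw [Fin.lt_def]
        show k + (T2 (downCell lam mu a _) : ℕ) < k + (T2 (downCell lam mu b _) : ℕ)
        have : T2 (downCell lam mu a (le_of_not_gt hia)) < T2 (downCell lam mu b (le_of_not_gt hib)) := by
          apply h2.2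
          · show (⟨((a : Fin (k+h) × ℕ).1 : ℕ) - k, _⟩ : Fin h) < ⟨((b : Fin (k+h) × ℕ).1 : ℕ) - k, _⟩
            rw [Fin.mk_lt_mk]
            have := Fin.lt_def.1 hrow
            omega
          · exact hcol
        exact Nat.add_lt_add_left (Fin.lt_def.1 this) k

end Split2
section Split3

variable {k h : ℕ} (lam : Fin k → ℕ) (mu : Fin h → ℕ)

lemma bigUp_upCell (a : sCells (k+h) (fun _ => 0) (Fin.append lam mu))
    (hi : ((a : Fin (k+h) × ℕ).1 : ℕ) < k) :
    bigUp lam mu (upCell lam mu a hi) = a :=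
  Subtype.ext (Prod.ext (Fin.ext rfl) rfl)

lemma upCell_bigUp (a1 : sCells k (fun _ => 0) lam) (hi) :
    upCell lam mu (bigUp lam mu a1) hi = a1 :=
  Subtype.ext (Prod.ext (Fin.ext rfl) rfl)

lemma bigDown_downCell (a : sCells (k+h) (fun _ => 0) (Fin.append lam mu))
    (hi : k ≤ ((a : Fin (k+h) × ℕ).1 : ℕ)) :
    bigDown lam mu (downCell lam mu a hi) = a :=
  Subtype.ext (Prod.ext (Fin.ext (by
    show k + (((a : Fin (k+h) × ℕ).1 : ℕ) - k) = ((a : Fin (k+h) × ℕ).1 : ℕ)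
    omega)) rfl)

lemma downCell_bigDown (a2 : sCells h (fun _ => 0) mu) (hi) :
    downCell lam mu (bigDown lam mu a2) hi = a2 :=
  Subtype.ext (Prod.ext (Fin.ext (by
    show k + ((a2 : Fin h × ℕ).1 : ℕ) - k = ((a2 : Fin h × ℕ).1 : ℕ)
    omega)) rfl)

lemma join_split (T : sCells (k+h) (fun _ => 0) (Fin.append lam mu) → Fin (k+h))
    (hlt) (hge) :
    joinT lam mu (splitT1 lam mu T hlt) (splitT2 lam mu T hge) = T := by
  funext a
  unfold joinT
  by_cases hi : ((a : Fin (k+h) × ℕ).1 : ℕ) < k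
  · rw [dif_pos hi]
    apply Fin.ext
    show (T (bigUp lam mu (upCell lam mu a hi)) : ℕ) = (T a : ℕ)
    rw [bigUp_upCell]
  · rw [dif_neg hi]
    apply Fin.ext
    show k + ((T (bigDown lam mu (downCell lam mu a (le_of_not_gt hi))) : ℕ) - k) = (T a : ℕ)
    rw [bigDown_downCell]
    have := hge a (le_of_not_gt hi)
    omega

lemma split_join1 (T1 : sCells k (fun _ => 0) lam → Fin k)
    (T2 : sCells h (fun _ => 0) mu → Fin h) (hlt) :
    splitT1 lam mu (joinT lam mu T1 T2) hlt = T1 := by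
  funext a1
  apply Fin.ext
  show ((joinT lam mu T1 T2) (bigUp lam mu a1) : ℕ) = (T1 a1 : ℕ)
  unfold joinT
  have h1 : (((bigUp lam mu a1 : sCells (k+h) (fun _ => 0) (Fin.append lam mu))
      : Fin (k+h) × ℕ).1 : ℕ) < k := (a1 : Fin k × ℕ).1.isLt
  rw [dif_pos h1]
  show (T1 (upCell lam mu (bigUp lam mu a1) h1) : ℕ) = (T1 a1 : ℕ)
  rw [upCell_bigUp]

lemma split_join2 (T1 : sCells k (fun _ => 0) lam → Fin k)
    (T2 : sCells h (fun _ => 0) mu → Fin h) (hge) :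
    splitT2 lam mu (joinT lam mu T1 T2) hge = T2 := by
  funext a2
  apply Fin.ext
  show ((joinT lam mu T1 T2) (bigDown lam mu a2) : ℕ) - k = (T2 a2 : ℕ)
  unfold joinT
  have h1 : ¬ (((bigDown lam mu a2 : sCells (k+h) (fun _ => 0) (Fin.append lam mu))
      : Fin (k+h) × ℕ).1 : ℕ) < k := by
    show ¬ (k + ((a2 : Fin h × ℕ).1 : ℕ) < k)
    omega
  rw [dif_neg h1]
  show k + (T2 (downCell lam mu (bigDown lam mu a2) (le_of_not_gt h1)) : ℕ) - k = (T2 a2 : ℕ)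
  rw [downCell_bigDown]
  omega

lemma M_card :
    (Finset.univ.filter fun a : sCells (k+h) (fun _ => 0) (Fin.append lam mu) =>
      k ≤ ((a : Fin (k+h) × ℕ).1 : ℕ)).card = ∑ j : Fin h, mu j := by
  classical
  rw [card_ge_eq_sum (fun a : sCells (k+h) (fun _ => 0) (Fin.append lam mu) =>
    (a : Fin (k+h) × ℕ).1)]
  refine Finset.sum_congr rfl fun j _ => ?_
  rw [card_row, Fin.append_right]

lemma join_card (T1 : sCells k (fun _ => 0) lam → Fin k)
    (T2 : sCells h (fun _ => 0) mu → Fin h) :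
    (Finset.univ.filter fun a => k ≤ ((joinT lam mu T1 T2 a) : ℕ)).card
      = ∑ j : Fin h, mu j := by
  classical
  rw [← M_card lam mu]
  congr 1
  apply Finset.filter_congr
  intro a _
  unfold joinT
  by_cases hi : ((a : Fin (k+h) × ℕ).1 : ℕ) < k
  · rw [dif_pos hi]
    have h2 := (T1 (upCell lam mu a hi)).isLt
    simp only [Fin.coe_castAdd]
    omega
  · rw [dif_neg hi]
    simp only [Fin.coe_natAdd]
    omega

lemma N_ge (hpart : Antitone (Fin.append lam mu))
    {T : sCells (k+h) (fun _ => 0) (Fin.append lam mu) → Fin (k+h)}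
    (hT : IsSSYT (fun _ => 0) (Fin.append lam mu) T) :
    (∑ j : Fin h, mu j) ≤ (Finset.univ.filter fun a => k ≤ ((T a) : ℕ)).card := by
  classical
  rw [← M_card lam mu]
  apply Finset.card_le_card
  intro a ha
  simp only [Finset.mem_filter, Finset.mem_univ, true_and] at ha ⊢
  exact le_trans ha (rowLB hpart hT a)

lemma N_eq_iff (hpart : Antitone (Fin.append lam mu))
    {T : sCells (k+h) (fun _ => 0) (Fin.append lam mu) → Fin (k+h)}
    (hT : IsSSYT (fun _ => 0) (Fin.append lam mu) T) :
    (Finset.univ.filter fun a => k ≤ ((T a) : ℕ)).card = (∑ j : Fin h, mu j) ↔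
      ∀ a : sCells (k+h) (fun _ => 0) (Fin.append lam mu),
        ((a : Fin (k+h) × ℕ).1 : ℕ) < k → ((T a) : ℕ) < k := by
  classical
  constructor
  · intro hNM a ha
    by_contra hge
    push_neg at hge
    have hsub : (Finset.univ.filter fun a : sCells (k+h) (fun _ => 0) (Fin.append lam mu) =>
        k ≤ ((a : Fin (k+h) × ℕ).1 : ℕ))
        ⊆ Finset.univ.filter fun a => k ≤ ((T a) : ℕ) := by
      intro b hb
      simp only [Finset.mem_filter, Finset.mem_univ, true_and] at hb ⊢
      exact le_trans hb (rowLB hpart hT b)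
    have heq := Finset.eq_of_subset_of_card_le hsub (by rw [hNM, M_card lam mu])
    have : a ∈ Finset.univ.filter fun a : sCells (k+h) (fun _ => 0) (Fin.append lam mu) =>
        k ≤ ((a : Fin (k+h) × ℕ).1 : ℕ) := by
      rw [heq]
      simp only [Finset.mem_filter, Finset.mem_univ, true_and]
      exact hge
    simp only [Finset.mem_filter, Finset.mem_univ, true_and] at this
    omega
  · intro hcond
    refine le_antisymm ?_ (N_ge lam mu hpart hT)
    rw [← M_card lam mu]
    apply Finset.card_le_card
    intro a ha
    simp only [Finset.mem_filter, Finset.mem_univ, true_and] at ha ⊢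
    by_contra hlt
    push_neg at hlt
    have := hcond a hlt
    omega

end Split3
section Split4

variable {k h : ℕ} (lam : Fin k → ℕ) (mu : Fin h → ℕ)

lemma cardz (hpart : Antitone (Fin.append lam mu))
    {T : sCells (k+h) (fun _ => 0) (Fin.append lam mu) → Fin (k+h)}
    (hT : IsSSYT (fun _ => 0) (Fin.append lam mu) T) (hlt) (i : Fin k) :
    (Finset.univ.filter fun a => T a = Fin.castAdd h i).card
      = (Finset.univ.filter fun a1 => splitT1 lam mu T hlt a1 = i).card := by
  classical
  refine Finset.card_bij' (fun a ha => upCell lam mu a ?_) (fun a1 _ => bigUp lam mu a1)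
    ?_ ?_ ?_ ?_
  · -- row < k
    have h2 := (Finset.mem_filter.1 ha).2
    have h3 : ((T a) : ℕ) < k := by rw [h2]; exact i.isLt
    exact lt_of_le_of_lt (rowLB hpart hT a) h3
  · intro a ha
    simp only [Finset.mem_filter, Finset.mem_univ, true_and] at ha ⊢
    apply Fin.ext
    show (T (bigUp lam mu (upCell lam mu a _)) : ℕ) = (i : ℕ)
    rw [bigUp_upCell, ha]
    rfl
  · intro a1 ha1
    simp only [Finset.mem_filter, Finset.mem_univ, true_and] at ha1 ⊢
    apply Fin.ext
    show (T (bigUp lam mu a1) : ℕ) = ((Fin.castAdd h i : Fin (k+h)) : ℕ)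
    have := congrArg Fin.val ha1
    exact this
  · intro a ha
    exact bigUp_upCell lam mu a _
  · intro a1 ha1
    exact upCell_bigUp lam mu a1 _

lemma cardy {T : sCells (k+h) (fun _ => 0) (Fin.append lam mu) → Fin (k+h)}
    (hlt : ∀ a : sCells (k+h) (fun _ => 0) (Fin.append lam mu),
      ((a : Fin (k+h) × ℕ).1 : ℕ) < k → ((T a) : ℕ) < k) (hge) (j : Fin h) :
    (Finset.univ.filter fun a => T a = Fin.natAdd k j).card
      = (Finset.univ.filter fun a2 => splitT2 lam mu T hge a2 = j).card := by
  classical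
  refine Finset.card_bij' (fun a ha => downCell lam mu a ?_) (fun a2 _ => bigDown lam mu a2)
    ?_ ?_ ?_ ?_
  · -- k ≤ row
    have h2 := (Finset.mem_filter.1 ha).2
    have h3 : k ≤ ((T a) : ℕ) := by rw [h2]; exact Nat.le_add_right k _
    by_contra hrow
    push_neg at hrow
    have := hlt a hrow
    omega
  · intro a ha
    simp only [Finset.mem_filter, Finset.mem_univ, true_and] at ha ⊢
    apply Fin.ext
    show (T (bigDown lam mu (downCell lam mu a _)) : ℕ) - k = (j : ℕ)
    rw [bigDown_downCell, ha]
    show k + (j : ℕ) - k = (j : ℕ)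
    omega
  · intro a2 ha2
    simp only [Finset.mem_filter, Finset.mem_univ, true_and] at ha2 ⊢
    apply Fin.ext
    show (T (bigDown lam mu a2) : ℕ) = k + (j : ℕ)
    have h4 := congrArg Fin.val ha2
    have h5 : (T (bigDown lam mu a2) : ℕ) - k = (j : ℕ) := h4
    have h6 : k ≤ (T (bigDown lam mu a2) : ℕ) := hge _ (Nat.le_add_right k _)
    omega
  · intro a ha
    exact bigDown_downCell lam mu a _
  · intro a2 ha2
    exact downCell_bigDown lam mu a2 _

end Split4
open Classical in
lemma key {k h : ℕ} (lam : Fin k → ℕ) (mu : Fin h → ℕ)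
    (hpart : Antitone (Fin.append lam mu)) (z : Fin k → ℝ) (y : Fin h → ℝ) :
    (∑ T : sCells (k+h) (fun _ => 0) (Fin.append lam mu) → Fin (k+h),
      if IsSSYT (fun _ => 0) (Fin.append lam mu) T ∧
          (Finset.univ.filter fun a => k ≤ ((T a) : ℕ)).card = ∑ j : Fin h, mu j then
        (∏ i : Fin k, z i ^ (Finset.univ.filter fun a => T a = Fin.castAdd h i).card) *
        (∏ j : Fin h, y j ^ (Finset.univ.filter fun a => T a = Fin.natAdd k j).card)
      else 0)
    = schur k k lam z * schur h h mu y := by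
  classical
  calc
    (∑ T : sCells (k+h) (fun _ => 0) (Fin.append lam mu) → Fin (k+h),
      if IsSSYT (fun _ => 0) (Fin.append lam mu) T ∧
          (Finset.univ.filter fun a => k ≤ ((T a) : ℕ)).card = ∑ j : Fin h, mu j then
        (∏ i : Fin k, z i ^ (Finset.univ.filter fun a => T a = Fin.castAdd h i).card) *
        (∏ j : Fin h, y j ^ (Finset.univ.filter fun a => T a = Fin.natAdd k j).card)
      else 0)
      = ∑ T ∈ Finset.univ.filter (fun T : sCells (k+h) (fun _ => 0) (Fin.append lam mu) → Fin (k+h) =>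
            IsSSYT (fun _ => 0) (Fin.append lam mu) T ∧
            (Finset.univ.filter fun a => k ≤ ((T a) : ℕ)).card = ∑ j : Fin h, mu j),
          (∏ i : Fin k, z i ^ (Finset.univ.filter fun a => T a = Fin.castAdd h i).card) *
          (∏ j : Fin h, y j ^ (Finset.univ.filter fun a => T a = Fin.natAdd k j).card) :=
      (Finset.sum_filter _ _).symm
    _ = ∑ p ∈ Finset.univ.filter (fun p : (sCells k (fun _ => 0) lam → Fin k) ×
              (sCells h (fun _ => 0) mu → Fin h) =>
            IsSSYT (fun _ => 0) lam p.1 ∧ IsSSYT (fun _ => 0) mu p.2),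
          (∏ i : Fin k, z i ^ (Finset.univ.filter fun a1 => p.1 a1 = i).card) *
          (∏ j : Fin h, y j ^ (Finset.univ.filter fun a2 => p.2 a2 = j).card) := ?_
    _ = ∑ p : (sCells k (fun _ => 0) lam → Fin k) × (sCells h (fun _ => 0) mu → Fin h),
          if IsSSYT (fun _ => 0) lam p.1 ∧ IsSSYT (fun _ => 0) mu p.2 then
            (∏ i : Fin k, z i ^ (Finset.univ.filter fun a1 => p.1 a1 = i).card) *
            (∏ j : Fin h, y j ^ (Finset.univ.filter fun a2 => p.2 a2 = j).card)
          else 0 := Finset.sum_filter _ _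
    _ = ∑ p : (sCells k (fun _ => 0) lam → Fin k) × (sCells h (fun _ => 0) mu → Fin h),
          (if IsSSYT (fun _ => 0) lam p.1 then
            ∏ i : Fin k, z i ^ (Finset.univ.filter fun a1 => p.1 a1 = i).card else 0) *
          (if IsSSYT (fun _ => 0) mu p.2 then
            ∏ j : Fin h, y j ^ (Finset.univ.filter fun a2 => p.2 a2 = j).card else 0) := by
      refine Finset.sum_congr rfl fun p _ => ?_
      by_cases h1 : IsSSYT (fun _ => 0) lam p.1 <;>
        by_cases h2 : IsSSYT (fun _ => 0) mu p.2 <;>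
        simp [h1, h2]
    _ = schur k k lam z * schur h h mu y := by
      rw [schur, schur, skewSchur, skewSchur, Finset.sum_mul_sum]
      exact Fintype.sum_prod_type _
  -- the bijection step
  refine Finset.sum_bij'
    (fun T hT =>
      (splitT1 lam mu T
        ((N_eq_iff lam mu hpart (Finset.mem_filter.1 hT).2.1).1 (Finset.mem_filter.1 hT).2.2),
       splitT2 lam mu T
        (fun a ha => le_trans ha (rowLB hpart (Finset.mem_filter.1 hT).2.1 a))))
    (fun p _ => joinT lam mu p.1 p.2) ?_ ?_ ?_ ?_ ?_
  · intro T hT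
    simp only [Finset.mem_filter, Finset.mem_univ, true_and]
    exact ⟨ssyt_split1 lam mu (Finset.mem_filter.1 hT).2.1
        ((N_eq_iff lam mu hpart (Finset.mem_filter.1 hT).2.1).1 (Finset.mem_filter.1 hT).2.2),
      ssyt_split2 lam mu (Finset.mem_filter.1 hT).2.1
        (fun a ha => le_trans ha (rowLB hpart (Finset.mem_filter.1 hT).2.1 a))⟩
  · intro p hp
    simp only [Finset.mem_filter, Finset.mem_univ, true_and] at hp ⊢
    exact ⟨ssyt_join lam mu hp.1 hp.2, join_card lam mu p.1 p.2⟩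
  · intro T hT
    exact join_split lam mu T
      ((N_eq_iff lam mu hpart (Finset.mem_filter.1 hT).2.1).1 (Finset.mem_filter.1 hT).2.2)
      (fun a ha => le_trans ha (rowLB hpart (Finset.mem_filter.1 hT).2.1 a))
  · intro p hp
    refine Prod.ext (split_join1 lam mu p.1 p.2 ?_) (split_join2 lam mu p.1 p.2 ?_)
    · intro a ha
      show (joinT lam mu p.1 p.2 a : ℕ) < k
      unfold joinT
      rw [dif_pos ha]
      exact (p.1 _).isLt
    · intro a ha
      show k ≤ (joinT lam mu p.1 p.2 a : ℕ)
      unfold joinT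
      rw [dif_neg (not_lt.2 ha)]
      exact Nat.le_add_right k _
  · intro T hT
    have hss := (Finset.mem_filter.1 hT).2.1
    refine congrArg₂ (· * ·) ?_ ?_
    · exact Finset.prod_congr rfl fun i _ => by rw [cardz lam mu hpart hss]
    · exact Finset.prod_congr rfl fun j _ => by
        rw [cardy lam mu ((N_eq_iff lam mu hpart hss).1 (Finset.mem_filter.1 hT).2.2)]
open Classical in
lemma schur_expand {k h : ℕ} (lam : Fin k → ℕ) (mu : Fin h → ℕ)
    (z : Fin k → ℝ) (y : Fin h → ℝ) (ε : ℝ) :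
    schur (k+h) (k+h) (Fin.append lam mu) (Fin.append z fun j => ε * y j)
      = ∑ T : sCells (k+h) (fun _ => 0) (Fin.append lam mu) → Fin (k+h),
          if IsSSYT (fun _ => 0) (Fin.append lam mu) T then
            (∏ i : Fin k, z i ^ (Finset.univ.filter fun a => T a = Fin.castAdd h i).card) *
            ((∏ j : Fin h, y j ^ (Finset.univ.filter fun a => T a = Fin.natAdd k j).card) *
             ε ^ (Finset.univ.filter fun a => k ≤ ((T a) : ℕ)).card)
          else 0 := by
  rw [schur, skewSchur]
  refine Finset.sum_congr rfl fun T _ => ?_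
  split_ifs with hT
  · rw [Fin.prod_univ_add]
    congr 1
    · exact Finset.prod_congr rfl fun i _ => by rw [Fin.append_left]
    · rw [card_ge_eq_sum T, ← Finset.prod_pow_eq_pow_sum, ← Finset.prod_mul_distrib]
      refine Finset.prod_congr rfl fun j _ => ?_
      rw [Fin.append_right, mul_pow]
      ring
  · rfl

/-- Splitting formula for Schur polynomials: for a partition obtained by appending mu
to lam, scaling the last h variables by eps and dividing by eps^|mu|, the limit as
eps tends to 0 is the product of the two Schur polynomials. -/
theorem stmt16 (k h : ℕ) (lam : Fin k → ℕ) (mu : Fin h → ℕ)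
    (hpart : Antitone (Fin.append lam mu))
    (z : Fin k → ℝ) (y : Fin h → ℝ) (hz : ∀ i, 0 < z i) (hy : ∀ i, 0 < y i)
    (hdist : Function.Injective (Fin.append z y)) :
    Filter.Tendsto
      (fun ε : ℝ =>
        schur (k + h) (k + h) (Fin.append lam mu) (Fin.append z (fun j => ε * y j))
          / ε ^ (∑ j : Fin h, mu j))
      (nhdsWithin 0 {(0 : ℝ)}ᶜ)
      (nhds (schur k k lam z * schur h h mu y)) := by
  classical
  set M := ∑ j : Fin h, mu j with hM
  set F : ℝ → ℝ := fun ε =>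
    ∑ T : sCells (k+h) (fun _ => 0) (Fin.append lam mu) → Fin (k+h),
      if IsSSYT (fun _ => 0) (Fin.append lam mu) T then
        (∏ i : Fin k, z i ^ (Finset.univ.filter fun a => T a = Fin.castAdd h i).card) *
        ((∏ j : Fin h, y j ^ (Finset.univ.filter fun a => T a = Fin.natAdd k j).card) *
         ε ^ ((Finset.univ.filter fun a => k ≤ ((T a) : ℕ)).card - M))
      else 0 with hF
  have hcont : Continuous F := by
    apply continuous_finset_sum
    intro T _
    by_cases hT : IsSSYT (fun _ => 0) (Fin.append lam mu) T
    · simp only [if_pos hT]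
      exact continuous_const.mul (continuous_const.mul (continuous_pow _))
    · simp only [if_neg hT]
      exact continuous_const
  have hF0 : F 0 = schur k k lam z * schur h h mu y := by
    rw [← key lam mu hpart z y, hF]
    refine Finset.sum_congr rfl fun T _ => ?_
    by_cases hT : IsSSYT (fun _ => 0) (Fin.append lam mu) T
    · rw [if_pos hT]
      have hge := N_ge lam mu hpart hT
      by_cases hc : (Finset.univ.filter fun a => k ≤ ((T a) : ℕ)).card = M
      · rw [if_pos ⟨hT, hc⟩, hc, Nat.sub_self, pow_zero, mul_one]
      · rw [if_neg (fun hcon => hc hcon.2)]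
        have hne : (Finset.univ.filter fun a => k ≤ ((T a) : ℕ)).card - M ≠ 0 := by omega
        rw [zero_pow hne, mul_zero, mul_zero]
    · rw [if_neg hT, if_neg (fun hcon => hT hcon.1)]
  have heq : ∀ ε : ℝ, ε ≠ 0 →
      schur (k+h) (k+h) (Fin.append lam mu) (Fin.append z fun j => ε * y j) / ε ^ M
        = F ε := by
    intro ε hε
    rw [schur_expand lam mu z y ε, hF, Finset.sum_div]
    refine Finset.sum_congr rfl fun T _ => ?_
    by_cases hT : IsSSYT (fun _ => 0) (Fin.append lam mu) T
    · rw [if_pos hT, if_pos hT]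
      have hge : M ≤ (Finset.univ.filter fun a => k ≤ ((T a) : ℕ)).card :=
        N_ge lam mu hpart hT
      have hpow : ε ^ (Finset.univ.filter fun a => k ≤ ((T a) : ℕ)).card
          = ε ^ ((Finset.univ.filter fun a => k ≤ ((T a) : ℕ)).card - M) * ε ^ M := by
        rw [← pow_add]
        congr 1
        omega
      rw [hpow, show
        (∏ i : Fin k, z i ^ (Finset.univ.filter fun a => T a = Fin.castAdd h i).card) *
        ((∏ j : Fin h, y j ^ (Finset.univ.filter fun a => T a = Fin.natAdd k j).card) *
         (ε ^ ((Finset.univ.filter fun a => k ≤ ((T a) : ℕ)).card - M) * ε ^ M))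
        = ((∏ i : Fin k, z i ^ (Finset.univ.filter fun a => T a = Fin.castAdd h i).card) *
          ((∏ j : Fin h, y j ^ (Finset.univ.filter fun a => T a = Fin.natAdd k j).card) *
           ε ^ ((Finset.univ.filter fun a => k ≤ ((T a) : ℕ)).card - M))) * ε ^ M
        from by ring, mul_div_cancel_right₀ _ (pow_ne_zero M hε)]
    · rw [if_neg hT, if_neg hT, zero_div]
  have htendsto : Filter.Tendsto F (nhdsWithin 0 {(0:ℝ)}ᶜ)
      (nhds (schur k k lam z * schur h h mu y)) := by
    rw [← hF0]
    exact (hcont.tendsto 0).mono_left nhdsWithin_le_nhds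
  apply Filter.Tendsto.congr' _ htendsto
  filter_upwards [self_mem_nhdsWithin] with ε hε
  exact (heq ε (by simpa using hε)).symm
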